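/- Let x_1,...,x_m be points in a metric space (Y, d) and θ_0 ∈ Y. If strictly more than half of the points satisfy d(x_j, θ_0) ≤ ε, then the metric median x* = med_0(x_1,...,x_m) satisfies d(x*, θ_0) ≤ 3ε. -/
import Mathlib


/-- `xstar` is a metric median (`med₀`) of `x_1, ..., x_m`: it is one of the
points, and it is a minimax center in the sense that whenever some point `x j`
has more than half of the points within distance `2ε`, so does `xstar`. -/
def IsMetricMedian {Y : Type*} [MetricSpace Y] {m : ℕ} (x : Fin m → Y) (xstar : Y) : Prop :=
  (∃ j₀ : Fin m, xstar = x j₀) ∧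
  ∀ ε > (0 : ℝ),
    (∃ j : Fin m, m < 2 * (Finset.univ.filter fun i => dist (x i) (x j) ≤ 2 * ε).card) →
      m < 2 * (Finset.univ.filter fun i => dist (x i) xstar ≤ 2 * ε).card

/-- If strictly more than half of the points `x_1, ..., x_m` lie within distance
`ε` of `θ₀`, then the metric median is within distance `3ε` of `θ₀`. -/
theorem metric_median_close
    {Y : Type*} [MetricSpace Y] {m : ℕ} (x : Fin m → Y) (xstar : Y)
    (hmed : IsMetricMedian x xstar) (θ₀ : Y) (ε : ℝ) (hε : 0 < ε)
    (hmaj : m < 2 * (Finset.univ.filter fun j => dist (x j) θ₀ ≤ ε).card) :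
    dist xstar θ₀ ≤ 3 * ε := by
  set S : Finset (Fin m) := Finset.univ.filter fun j => dist (x j) θ₀ ≤ ε with hS
  -- S is nonempty
  have hScard : m < 2 * S.card := hmaj
  have hSne : S.Nonempty := by
    rw [← Finset.card_pos]
    omega
  obtain ⟨j, hj⟩ := hSne
  have hjd : dist (x j) θ₀ ≤ ε := (Finset.mem_filter.mp hj).2
  -- every point of S is within 2ε of x j
  have hsub : S ⊆ Finset.univ.filter fun i => dist (x i) (x j) ≤ 2 * ε := by
    intro i hi
    have hid : dist (x i) θ₀ ≤ ε := (Finset.mem_filter.mp hi).2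
    refine Finset.mem_filter.mpr ⟨Finset.mem_univ _, ?_⟩
    calc dist (x i) (x j) ≤ dist (x i) θ₀ + dist (x j) θ₀ := dist_triangle_right _ _ _
      _ ≤ 2 * ε := by linarith
  have hexists : ∃ j : Fin m,
      m < 2 * (Finset.univ.filter fun i => dist (x i) (x j) ≤ 2 * ε).card :=
    ⟨j, lt_of_lt_of_le hScard (by
      have := Finset.card_le_card hsub
      omega)⟩
  have hT := hmed.2 ε hε hexists
  set T : Finset (Fin m) := Finset.univ.filter fun i => dist (x i) xstar ≤ 2 * ε with hTdef
  -- S and T intersect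
  have hunion : (S ∪ T).card ≤ m := by
    simpa using Finset.card_le_card (Finset.subset_univ (S ∪ T))
  have hcards := Finset.card_union_add_card_inter S T
  have hinter : 0 < (S ∩ T).card := by omega
  obtain ⟨i, hi⟩ := Finset.card_pos.mp hinter
  have hiS : dist (x i) θ₀ ≤ ε := (Finset.mem_filter.mp (Finset.mem_of_mem_inter_left hi)).2
  have hiT : dist (x i) xstar ≤ 2 * ε := (Finset.mem_filter.mp (Finset.mem_of_mem_inter_right hi)).2
  calc dist xstar θ₀ ≤ dist xstar (x i) + dist (x i) θ₀ := dist_triangle _ _ _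
    _ ≤ 3 * ε := by rw [dist_comm] at hiT; linarith
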